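/- Let V be a d×d positive definite real matrix, let α ≥ 0, and let θ*, θ̂ ∈ ℝ^d satisfy (θ̂ − θ*)ᵀ V (θ̂ − θ*) ≤ α². Let 𝒜 ⊆ ℝ^d be a finite nonempty set and suppose x_t ∈ 𝒜 maximizes the UCB score x ↦ xᵀθ̂ + α·√(xᵀV⁻¹x) over 𝒜. Then for every x* ∈ 𝒜, x*ᵀθ* − x_tᵀθ* ≤ 2α·√(x_tᵀ V⁻¹ x_t). -/

import Mathlib

open Matrix

lemma psd_cauchy_schwarz {d : ℕ} {B : Matrix (Fin d) (Fin d) ℝ}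
    (hB : B.PosSemidef) (x y : Fin d → ℝ) :
    (x ⬝ᵥ (B *ᵥ y)) ^ 2 ≤ (x ⬝ᵥ (B *ᵥ x)) * (y ⬝ᵥ (B *ᵥ y)) := by
  have hsym : ∀ u v : Fin d → ℝ, u ⬝ᵥ (B *ᵥ v) = v ⬝ᵥ (B *ᵥ u) := by
    intro u v
    have hBt : Bᵀ = B := by
      have := hB.1.eq
      rwa [conjTranspose_eq_transpose_of_trivial] at this
    rw [dotProduct_mulVec, ← mulVec_transpose, hBt, dotProduct_comm]
  have key : discrim (y ⬝ᵥ (B *ᵥ y)) (2 * (x ⬝ᵥ (B *ᵥ y))) (x ⬝ᵥ (B *ᵥ x)) ≤ 0 := by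
    apply discrim_le_zero
    intro t
    have h0 := hB.dotProduct_mulVec_nonneg (x + t • y)
    have : (x + t • y) ⬝ᵥ (B *ᵥ (x + t • y)) =
        (y ⬝ᵥ (B *ᵥ y)) * (t * t) + 2 * (x ⬝ᵥ (B *ᵥ y)) * t + x ⬝ᵥ (B *ᵥ x) := by
      rw [mulVec_add, dotProduct_add, add_dotProduct, add_dotProduct]
      rw [mulVec_smul, dotProduct_smul, smul_dotProduct, smul_dotProduct, dotProduct_smul]
      have := hsym y x
      simp only [smul_eq_mul]
      ring_nf
      rw [hsym y x]
      ring
    rw [← this]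
    simpa using h0
  rw [discrim] at key
  nlinarith [key]

/-- Deterministic single-step regret bound for the UCB arm selection rule:
if `θ*` lies in the confidence ellipsoid of radius `α` around `θ̂` and `x_t`
maximizes the UCB score over the arm set `𝒜`, then for any `x* ∈ 𝒜`,
`x*ᵀθ* − x_tᵀθ* ≤ 2α √(x_tᵀ V⁻¹ x_t)`. -/
theorem ucb_single_step_regret {d : ℕ} (V : Matrix (Fin d) (Fin d) ℝ)
    (hV : V.PosDef) (α : ℝ) (hα : 0 ≤ α) (θstar θhat : Fin d → ℝ)
    (hconf : (θhat - θstar) ⬝ᵥ (V *ᵥ (θhat - θstar)) ≤ α ^ 2)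
    (𝒜 : Finset (Fin d → ℝ)) (h𝒜 : 𝒜.Nonempty) (xt : Fin d → ℝ)
    (hxt : xt ∈ 𝒜)
    (hmax : ∀ x ∈ 𝒜, x ⬝ᵥ θhat + α * Real.sqrt (x ⬝ᵥ (V⁻¹ *ᵥ x)) ≤
      xt ⬝ᵥ θhat + α * Real.sqrt (xt ⬝ᵥ (V⁻¹ *ᵥ xt))) :
    ∀ xstar ∈ 𝒜, xstar ⬝ᵥ θstar - xt ⬝ᵥ θstar ≤
      2 * α * Real.sqrt (xt ⬝ᵥ (V⁻¹ *ᵥ xt)) := by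
  intro xstar hxstar
  set Δ := θhat - θstar with hΔ
  have hinv : V⁻¹.PosSemidef := hV.inv.posSemidef
  have hVinvV : V⁻¹ *ᵥ (V *ᵥ Δ) = Δ := by
    rw [mulVec_mulVec, nonsing_inv_mul V (isUnit_iff_isUnit_det V |>.1 hV.isUnit), one_mulVec]
  -- key bound: for each x, |x ⬝ᵥ Δ| ≤ α √(x ⬝ᵥ V⁻¹ x)
  have key : ∀ x : Fin d → ℝ, |x ⬝ᵥ Δ| ≤ α * Real.sqrt (x ⬝ᵥ (V⁻¹ *ᵥ x)) := by
    intro x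
    have hcs := psd_cauchy_schwarz hinv x (V *ᵥ Δ)
    rw [hVinvV] at hcs
    have hyy : (V *ᵥ Δ) ⬝ᵥ Δ = Δ ⬝ᵥ (V *ᵥ Δ) := dotProduct_comm _ _
    have hnx : 0 ≤ x ⬝ᵥ (V⁻¹ *ᵥ x) := by simpa using hinv.dotProduct_mulVec_nonneg x
    have hsq : (x ⬝ᵥ Δ) ^ 2 ≤ (x ⬝ᵥ (V⁻¹ *ᵥ x)) * α ^ 2 := by
      calc (x ⬝ᵥ Δ) ^ 2 ≤ (x ⬝ᵥ (V⁻¹ *ᵥ x)) * ((V *ᵥ Δ) ⬝ᵥ Δ) := by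
            have h2 := psd_cauchy_schwarz hinv x (V *ᵥ Δ)
            rwa [hVinvV] at h2
        _ ≤ (x ⬝ᵥ (V⁻¹ *ᵥ x)) * α ^ 2 := by
            rw [hyy]; exact mul_le_mul_of_nonneg_left hconf hnx
    have := Real.sqrt_le_sqrt hsq
    rwa [Real.sqrt_sq_eq_abs, Real.sqrt_mul hnx, Real.sqrt_sq hα, mul_comm] at this
  have h1 := hmax xstar hxstar
  have h2 := key xstar
  have h3 := key xt
  have e1 : xstar ⬝ᵥ θstar = xstar ⬝ᵥ θhat - xstar ⬝ᵥ Δ := by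
    rw [hΔ, dotProduct_sub]; ring
  have e2 : xt ⬝ᵥ θstar = xt ⬝ᵥ θhat - xt ⬝ᵥ Δ := by
    rw [hΔ, dotProduct_sub]; ring
  have h2' := abs_le.1 h2
  have h3' := abs_le.1 h3
  have hns : 0 ≤ α * Real.sqrt (xstar ⬝ᵥ (V⁻¹ *ᵥ xstar)) :=
    mul_nonneg hα (Real.sqrt_nonneg _)
  rw [e1, e2]
  linarith [h2'.1, h2'.2, h3'.1, h3'.2]
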